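/- Let N ≥ 1 and let δ, δ' be positive reals. Let p_1,…,p_N and p'_1,…,p'_N be positive reals and x_1,…,x_N, x'_1,…,x'_N be reals. Define the N×N upper triangular matrix ℛ with diagonal entries √(1 + δ p_i) and, for j > i, entries ℛ_{ij} = (δ p_i/√(1 + δ p_i))·√(p_j e^{x_j}/(p_i e^{x_i})); set ℒ := ℛᵀ; and define ℛ', ℒ' analogously from δ', p'_i, x'_i. Assume (1/δ')(ℒ' ℛ' − I) = (1/δ)(ℛ ℒ − I). Then: (a) for every i = 1,…,N, p'_i + Σ_{j=1}^{i−1} δ' p'_j p'_i e^{x'_i − x'_j}/(1 + δ' p'_j) = p_i + Σ_{j=i+1}^{N} δ p_i p_j e^{x_j − x_i}/(1 + δ p_i); (b) there exists a constant C such that for every i = 1,…,N, (p'_i e^{x'_i}/(p_i e^{x_i}))·(1 + δ p_i)/(1 + δ Σ_{k=i}^{N} p_k e^{x_k − x_i})² = C. -/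

import Mathlib

open Finset Matrix

noncomputable def calR (N : ℕ) (δ : ℝ) (p x : Fin N → ℝ) : Matrix (Fin N) (Fin N) ℝ :=
  Matrix.of fun i j =>
    if i = j then Real.sqrt (1 + δ * p i)
    else if i < j then
      δ * p i / Real.sqrt (1 + δ * p i) *
        Real.sqrt (p j * Real.exp (x j) / (p i * Real.exp (x i)))
    else 0

lemma filter_le_eq_insert {N : ℕ} (j : Fin N) :
    Finset.univ.filter (fun k => j ≤ k) = insert j (Finset.univ.filter (fun k => j < k)) := by
  ext k
  simp only [Finset.mem_filter, Finset.mem_univ, true_and, Finset.mem_insert]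
  constructor
  · intro h; rcases eq_or_lt_of_le h with h | h
    · exact Or.inl h.symm
    · exact Or.inr h
  · rintro (rfl | h); · exact le_refl _
    · exact le_of_lt h

lemma calR_mul_transpose (N : ℕ) (δ : ℝ) (hδ : 0 < δ) (p x : Fin N → ℝ) (hp : ∀ i, 0 < p i)
    (i j : Fin N) (hij : i ≤ j) :
    (calR N δ p x * (calR N δ p x)ᵀ) i j
      = (if i = j then 1 else 0)
        + δ * (p i / (Real.sqrt (p i * Real.exp (x i)) * Real.sqrt (1 + δ * p i)))
            * (Real.sqrt (p j * Real.exp (x j))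
               * (1 + δ * ∑ k ∈ Finset.univ.filter (fun k => j ≤ k),
                    p k * Real.exp (x k - x j))
               / Real.sqrt (1 + δ * p j)) := by
  have hpi := hp i
  have hpj := hp j
  have hPi : (0:ℝ) < 1 + δ * p i := by positivity
  have hPj : (0:ℝ) < 1 + δ * p j := by positivity
  have hAi : (0:ℝ) < p i * Real.exp (x i) := by positivity
  have hAj : (0:ℝ) < p j * Real.exp (x j) := by positivity
  rw [Matrix.mul_apply]
  simp only [Matrix.transpose_apply]
  rw [← Finset.sum_subset (Finset.filter_subset (fun k => j ≤ k) Finset.univ)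
    (by
      intro k _ hk
      simp only [Finset.mem_filter, Finset.mem_univ, true_and, not_le] at hk
      have h1 : ¬ (j = k) := fun h => absurd hk (by simp [h])
      have h2 : ¬ (j < k) := fun h => absurd (lt_trans h hk) (lt_irrefl j)
      simp [calR, h1, h2])]
  rw [filter_le_eq_insert, Finset.sum_insert (by simp)]
  rw [Finset.mul_sum, Finset.sum_insert (by simp)]
  -- rewrite the sum terms on the left
  set s1 := Real.sqrt (1 + δ * p i) with hs1def
  set s2 := Real.sqrt (1 + δ * p j) with hs2def
  set a1 := Real.sqrt (p i * Real.exp (x i)) with ha1def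
  set a2 := Real.sqrt (p j * Real.exp (x j)) with ha2def
  have hs1 : s1 * s1 = 1 + δ * p i := Real.mul_self_sqrt hPi.le
  have hs2 : s2 * s2 = 1 + δ * p j := Real.mul_self_sqrt hPj.le
  have ha1 : a1 * a1 = p i * Real.exp (x i) := Real.mul_self_sqrt hAi.le
  have ha2 : a2 * a2 = p j * Real.exp (x j) := Real.mul_self_sqrt hAj.le
  have hs1p : 0 < s1 := Real.sqrt_pos.mpr hPi
  have hs2p : 0 < s2 := Real.sqrt_pos.mpr hPj
  have ha1p : 0 < a1 := Real.sqrt_pos.mpr hAi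
  have ha2p : 0 < a2 := Real.sqrt_pos.mpr hAj
  have hei : Real.exp (x i) ≠ 0 := (Real.exp_pos _).ne'
  have hej : Real.exp (x j) ≠ 0 := (Real.exp_pos _).ne'
  have hterm : ∀ k ∈ Finset.univ.filter (fun k => j < k),
      calR N δ p x i k * calR N δ p x j k
        = δ ^ 2 * p i * p j / (a1 * a2 * (s1 * s2)) * (p k * Real.exp (x k)) := by
    intro k hk
    simp only [Finset.mem_filter, Finset.mem_univ, true_and] at hk
    have hik : i < k := lt_of_le_of_lt hij hk
    have hAk : (0:ℝ) < p k * Real.exp (x k) := by have := hp k; positivity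
    have h1 : ¬ (i = k) := fun h => absurd hik (by simp [h])
    have h2 : ¬ (j = k) := fun h => absurd hk (by simp [h])
    simp only [calR, Matrix.of_apply, h1, h2, hik, hk, if_true, if_false]
    rw [Real.sqrt_div hAk.le, Real.sqrt_div hAk.le]
    rw [← ha1def, ← ha2def, ← hs1def, ← hs2def]
    calc δ * p i / s1 * (Real.sqrt (p k * Real.exp (x k)) / a1) *
          (δ * p j / s2 * (Real.sqrt (p k * Real.exp (x k)) / a2))
        = δ ^ 2 * p i * p j / (a1 * a2 * (s1 * s2)) *
            (Real.sqrt (p k * Real.exp (x k)) * Real.sqrt (p k * Real.exp (x k))) := by ring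
      _ = _ := by rw [Real.mul_self_sqrt hAk.le]
  rw [Finset.sum_congr rfl hterm, ← Finset.mul_sum]
  have hexp : ∀ k ∈ Finset.univ.filter (fun k => j < k),
      δ * (p k * Real.exp (x k - x j)) = δ / Real.exp (x j) * (p k * Real.exp (x k)) := by
    intro k _
    rw [Real.exp_sub]
    ring
  rw [Finset.sum_congr rfl hexp, ← Finset.mul_sum]
  -- now a pure algebraic identity in s1,s2,a1,a2 and T := ∑ p k exp (x k)
  have hpieq : p i = (s1 * s1 - 1) / δ := by rw [hs1]; field_simp; ring
  have hpjeq : p j = (s2 * s2 - 1) / δ := by rw [hs2]; field_simp; ring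
  have hs1m : s1 * s1 - 1 ≠ 0 := by rw [hs1]; nlinarith
  have hs2m : s2 * s2 - 1 ≠ 0 := by rw [hs2]; nlinarith
  have heieq : Real.exp (x i) = a1 * a1 * δ / (s1 * s1 - 1) := by
    rw [ha1, hs1, show (1:ℝ) + δ * p i - 1 = δ * p i from by ring]
    field_simp [hδ.ne', hpi.ne']
  have hejeq : Real.exp (x j) = a2 * a2 * δ / (s2 * s2 - 1) := by
    rw [ha2, hs2, show (1:ℝ) + δ * p j - 1 = δ * p j from by ring]
    field_simp [hδ.ne', hpj.ne']
  rcases eq_or_lt_of_le hij with rfl | hlt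
  · simp only [calR, Matrix.of_apply, if_true, ← hs1def, if_pos rfl]
    rw [Real.exp_sub, hpieq, hejeq]
    rw [show s2 = s1 from rfl, show a2 = a1 from rfl]
    field_simp
    ring
  · have h1 : ¬ (i = j) := fun h => absurd hlt (by simp [h])
    simp only [calR, Matrix.of_apply, h1, hlt, if_true, if_false, if_pos rfl]
    rw [Real.sqrt_div hAj.le, ← ha1def, ← ha2def, ← hs1def, ← hs2def]
    rw [Real.exp_sub, hpieq, hpjeq, hejeq]
    field_simp
    ring

lemma filter_le_eq_insert' {N : ℕ} (i : Fin N) :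
    Finset.univ.filter (fun k => k ≤ i) = insert i (Finset.univ.filter (fun k => k < i)) := by
  ext k
  simp only [Finset.mem_filter, Finset.mem_univ, true_and, Finset.mem_insert]
  constructor
  · intro h; rcases eq_or_lt_of_le h with h | h
    · exact Or.inl h
    · exact Or.inr h
  · rintro (rfl | h); · exact le_refl _
    · exact le_of_lt h

lemma transpose_mul_calR (N : ℕ) (δ : ℝ) (hδ : 0 < δ) (p x : Fin N → ℝ) (hp : ∀ i, 0 < p i)
    (i j : Fin N) (hij : i ≤ j) :
    ((calR N δ p x)ᵀ * calR N δ p x) i j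
      = (if i = j then 1 else 0)
        + δ * (Real.sqrt (p i * Real.exp (x i)) * Real.sqrt (p j * Real.exp (x j)))
            * (Real.exp (-x i) + δ * ∑ k ∈ Finset.univ.filter (fun k => k < i),
                 p k * Real.exp (-x k) / (1 + δ * p k)) := by
  have hpi := hp i
  have hpj := hp j
  have hPi : (0:ℝ) < 1 + δ * p i := by positivity
  have hPj : (0:ℝ) < 1 + δ * p j := by positivity
  have hAi : (0:ℝ) < p i * Real.exp (x i) := by positivity
  have hAj : (0:ℝ) < p j * Real.exp (x j) := by positivity
  rw [Matrix.mul_apply]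
  simp only [Matrix.transpose_apply]
  rw [← Finset.sum_subset (Finset.filter_subset (fun k => k ≤ i) Finset.univ)
    (by
      intro k _ hk
      simp only [Finset.mem_filter, Finset.mem_univ, true_and, not_le] at hk
      have h1 : ¬ (k = i) := fun h => absurd hk (by simp [h])
      have h2 : ¬ (k < i) := fun h => absurd (lt_trans h hk) (lt_irrefl k)
      simp [calR, h1, h2])]
  rw [filter_le_eq_insert', Finset.sum_insert (by simp)]
  set s1 := Real.sqrt (1 + δ * p i) with hs1def
  set a1 := Real.sqrt (p i * Real.exp (x i)) with ha1def
  set a2 := Real.sqrt (p j * Real.exp (x j)) with ha2def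
  have hs1 : s1 * s1 = 1 + δ * p i := Real.mul_self_sqrt hPi.le
  have ha1 : a1 * a1 = p i * Real.exp (x i) := Real.mul_self_sqrt hAi.le
  have ha2 : a2 * a2 = p j * Real.exp (x j) := Real.mul_self_sqrt hAj.le
  have hs1p : 0 < s1 := Real.sqrt_pos.mpr hPi
  have ha1p : 0 < a1 := Real.sqrt_pos.mpr hAi
  have ha2p : 0 < a2 := Real.sqrt_pos.mpr hAj
  have hei : Real.exp (x i) ≠ 0 := (Real.exp_pos _).ne'
  have hs1m : s1 * s1 - 1 ≠ 0 := by rw [hs1]; nlinarith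
  have heieq : Real.exp (x i) = a1 * a1 * δ / (s1 * s1 - 1) := by
    rw [ha1, hs1, show (1:ℝ) + δ * p i - 1 = δ * p i from by ring]
    field_simp [hδ.ne', hpi.ne']
  have hpieq : p i = (s1 * s1 - 1) / δ := by rw [hs1]; field_simp; ring
  have hterm : ∀ k ∈ Finset.univ.filter (fun k => k < i),
      calR N δ p x k i * calR N δ p x k j
        = δ ^ 2 * a1 * a2 * (p k * Real.exp (-x k) / (1 + δ * p k)) := by
    intro k hk
    simp only [Finset.mem_filter, Finset.mem_univ, true_and] at hk
    have hkj : k < j := lt_of_lt_of_le hk hij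
    have hpk := hp k
    have hPk : (0:ℝ) < 1 + δ * p k := by positivity
    have hAk : (0:ℝ) < p k * Real.exp (x k) := by positivity
    have h1 : ¬ (k = i) := fun h => absurd hk (by simp [h])
    have h2 : ¬ (k = j) := fun h => absurd hkj (by simp [h])
    simp only [calR, Matrix.of_apply, h1, h2, hk, hkj, if_true, if_false]
    rw [Real.sqrt_div hAi.le, Real.sqrt_div hAj.le, ← ha1def, ← ha2def]
    set sk := Real.sqrt (1 + δ * p k) with hskdef
    set ak := Real.sqrt (p k * Real.exp (x k)) with hakdef
    have hsk : sk * sk = 1 + δ * p k := Real.mul_self_sqrt hPk.le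
    have hak : ak * ak = p k * Real.exp (x k) := Real.mul_self_sqrt hAk.le
    have hskp : 0 < sk := Real.sqrt_pos.mpr hPk
    have hakp : 0 < ak := Real.sqrt_pos.mpr hAk
    have hskm : sk * sk - 1 ≠ 0 := by rw [hsk]; nlinarith
    have hek : Real.exp (x k) ≠ 0 := (Real.exp_pos _).ne'
    have hekeq : Real.exp (x k) = ak * ak * δ / (sk * sk - 1) := by
      rw [hak, hsk, show (1:ℝ) + δ * p k - 1 = δ * p k from by ring]
      field_simp [hδ.ne', hpk.ne']
    have hpkeq : p k = (sk * sk - 1) / δ := by rw [hsk]; field_simp; ring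
    rw [Real.exp_neg, hpkeq, hekeq]
    field_simp [hδ.ne', hskp.ne', hakp.ne', hskm]
    ring
  rw [Finset.sum_congr rfl hterm, ← Finset.mul_sum]
  rcases eq_or_lt_of_le hij with rfl | hlt
  · have ha21 : a2 = a1 := by rw [ha2def, ha1def]
    rw [ha21]
    simp only [calR, Matrix.of_apply, if_pos rfl, ← hs1def, ← ha1def, if_true]
    rw [Real.exp_neg, heieq]
    field_simp [hδ.ne', hs1p.ne', ha1p.ne', hs1m]
    ring
  · have h1 : ¬ (i = j) := fun h => absurd hlt (by simp [h])
    simp only [calR, Matrix.of_apply, h1, hlt, if_true, if_false, if_pos rfl]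
    rw [Real.sqrt_div hAj.le, ← ha1def, ← ha2def, ← hs1def]
    rw [Real.exp_neg, hpieq, heieq]
    field_simp [hδ.ne', hs1p.ne', ha1p.ne', ha2p.ne', hs1m]
    ring

set_option maxHeartbeats 1000000 in
theorem stmt13 (N : ℕ) (hN : 1 ≤ N) (δ δ' : ℝ) (hδ : 0 < δ) (hδ' : 0 < δ')
    (p p' x x' : Fin N → ℝ)
    (hp : ∀ i, 0 < p i) (hp' : ∀ i, 0 < p' i)
    (hyp : (1 / δ') • ((calR N δ' p' x')ᵀ * calR N δ' p' x' - (1 : Matrix (Fin N) (Fin N) ℝ))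
      = (1 / δ) • (calR N δ p x * (calR N δ p x)ᵀ - (1 : Matrix (Fin N) (Fin N) ℝ))) :
    (∀ i : Fin N,
      p' i + ∑ j ∈ Finset.univ.filter (fun j => j < i),
          δ' * p' j * p' i * Real.exp (x' i - x' j) / (1 + δ' * p' j)
        = p i + ∑ j ∈ Finset.univ.filter (fun j => i < j),
          δ * p i * p j * Real.exp (x j - x i) / (1 + δ * p i)) ∧
    (∃ C : ℝ, ∀ i : Fin N,
      p' i * Real.exp (x' i) / (p i * Real.exp (x i)) *
          ((1 + δ * p i) /
            (1 + δ * ∑ k ∈ Finset.univ.filter (fun k => i ≤ k),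
              p k * Real.exp (x k - x i)) ^ 2)
        = C) := by
  have key : ∀ i j : Fin N, i ≤ j →
      Real.sqrt (p' i * Real.exp (x' i)) * Real.sqrt (p' j * Real.exp (x' j)) *
        (Real.exp (-x' i) + δ' * ∑ k ∈ Finset.univ.filter (fun k => k < i),
            p' k * Real.exp (-x' k) / (1 + δ' * p' k))
      = p i / (Real.sqrt (p i * Real.exp (x i)) * Real.sqrt (1 + δ * p i)) *
          (Real.sqrt (p j * Real.exp (x j)) *
            (1 + δ * ∑ k ∈ Finset.univ.filter (fun k => j ≤ k), p k * Real.exp (x k - x j))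
            / Real.sqrt (1 + δ * p j)) := by
    intro i j hij
    have h := congrFun (congrFun hyp i) j
    simp only [Matrix.smul_apply, Matrix.sub_apply, Matrix.one_apply, smul_eq_mul] at h
    rw [transpose_mul_calR N δ' hδ' p' x' hp' i j hij,
        calR_mul_transpose N δ hδ p x hp i j hij] at h
    rw [add_sub_cancel_left, add_sub_cancel_left] at h
    rw [mul_assoc δ', mul_assoc δ, one_div, one_div,
        inv_mul_cancel_left₀ hδ'.ne', inv_mul_cancel_left₀ hδ.ne'] at h
    exact h
  have hSnn : ∀ i : Fin N, 0 ≤ ∑ k ∈ Finset.univ.filter (fun k => i ≤ k),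
      p k * Real.exp (x k - x i) := by
    intro i
    refine Finset.sum_nonneg fun k _ => ?_
    have := hp k; positivity
  have hSpos : ∀ i : Fin N, (0:ℝ) < 1 + δ * ∑ k ∈ Finset.univ.filter (fun k => i ≤ k),
      p k * Real.exp (x k - x i) := by
    intro i; nlinarith [hSnn i]
  constructor
  · -- part (a)
    intro i
    have hpi := hp i
    have hpi' := hp' i
    have h := key i i (le_refl i)
    have hLa : p' i + ∑ j ∈ Finset.univ.filter (fun j => j < i),
        δ' * p' j * p' i * Real.exp (x' i - x' j) / (1 + δ' * p' j)
        = Real.sqrt (p' i * Real.exp (x' i)) * Real.sqrt (p' i * Real.exp (x' i)) *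
          (Real.exp (-x' i) + δ' * ∑ k ∈ Finset.univ.filter (fun k => k < i),
            p' k * Real.exp (-x' k) / (1 + δ' * p' k)) := by
      rw [Real.mul_self_sqrt (by positivity)]
      rw [mul_add, ← mul_assoc, Finset.mul_sum]
      congr 1
      · rw [mul_assoc, ← Real.exp_add]; simp
      · refine Finset.sum_congr rfl fun k hk => ?_
        rw [Real.exp_sub, Real.exp_neg]
        ring
    have hRa : p i + ∑ j ∈ Finset.univ.filter (fun j => i < j),
        δ * p i * p j * Real.exp (x j - x i) / (1 + δ * p i)
        = p i / (Real.sqrt (p i * Real.exp (x i)) * Real.sqrt (1 + δ * p i)) *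
          (Real.sqrt (p i * Real.exp (x i)) *
            (1 + δ * ∑ k ∈ Finset.univ.filter (fun k => i ≤ k), p k * Real.exp (x k - x i))
            / Real.sqrt (1 + δ * p i)) := by
      have hP : (0:ℝ) < 1 + δ * p i := by positivity
      have hA : (0:ℝ) < p i * Real.exp (x i) := by positivity
      have hss : Real.sqrt (1 + δ * p i) * Real.sqrt (1 + δ * p i) = 1 + δ * p i :=
        Real.mul_self_sqrt hP.le
      have hApos : 0 < Real.sqrt (p i * Real.exp (x i)) := Real.sqrt_pos.mpr hA
      have hspos : 0 < Real.sqrt (1 + δ * p i) := Real.sqrt_pos.mpr hP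
      rw [filter_le_eq_insert i, Finset.sum_insert (by simp)]
      simp only [sub_self, Real.exp_zero, mul_one]
      rw [Finset.sum_congr rfl (fun j hj =>
        show δ * p i * p j * Real.exp (x j - x i) / (1 + δ * p i)
          = δ * p i / (1 + δ * p i) * (p j * Real.exp (x j - x i)) from by ring)]
      rw [← Finset.mul_sum, ← hss]
      field_simp
      rw [Real.sqrt_sq (Real.sqrt_nonneg _), Real.sq_sqrt (by positivity : (0:ℝ) ≤ 1 + p i * δ)]
      ring
    rw [hLa, hRa]
    exact h
  · -- part (b)
    have claim : ∀ i j : Fin N, i ≤ j →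
        p' i * Real.exp (x' i) / (p i * Real.exp (x i)) *
          ((1 + δ * p i) /
            (1 + δ * ∑ k ∈ Finset.univ.filter (fun k => i ≤ k),
              p k * Real.exp (x k - x i)) ^ 2)
        = p' j * Real.exp (x' j) / (p j * Real.exp (x j)) *
          ((1 + δ * p j) /
            (1 + δ * ∑ k ∈ Finset.univ.filter (fun k => j ≤ k),
              p k * Real.exp (x k - x j)) ^ 2) := by
      intro i j hij
      have hpi := hp i
      have hpj := hp j
      have hpi' := hp' i
      have hpj' := hp' j
      have h1 := key i i (le_refl i)
      have h2 := key i j hij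
      set a := Real.sqrt (p i * Real.exp (x i)) with hadef
      set b := Real.sqrt (p j * Real.exp (x j)) with hbdef
      set a' := Real.sqrt (p' i * Real.exp (x' i)) with ha'def
      set b' := Real.sqrt (p' j * Real.exp (x' j)) with hb'def
      set si := Real.sqrt (1 + δ * p i) with hsidef
      set sj := Real.sqrt (1 + δ * p j) with hsjdef
      set Si := ∑ k ∈ Finset.univ.filter (fun k => i ≤ k), p k * Real.exp (x k - x i) with hSidef
      set Sj := ∑ k ∈ Finset.univ.filter (fun k => j ≤ k), p k * Real.exp (x k - x j) with hSjdef
      have ha : a * a = p i * Real.exp (x i) := Real.mul_self_sqrt (by positivity)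
      have hb : b * b = p j * Real.exp (x j) := Real.mul_self_sqrt (by positivity)
      have ha' : a' * a' = p' i * Real.exp (x' i) := Real.mul_self_sqrt (by positivity)
      have hb' : b' * b' = p' j * Real.exp (x' j) := Real.mul_self_sqrt (by positivity)
      have hsi : si * si = 1 + δ * p i := Real.mul_self_sqrt (by positivity)
      have hsj : sj * sj = 1 + δ * p j := Real.mul_self_sqrt (by positivity)
      have hap : 0 < a := Real.sqrt_pos.mpr (by positivity)
      have hbp : 0 < b := Real.sqrt_pos.mpr (by positivity)
      have ha'p : 0 < a' := Real.sqrt_pos.mpr (by positivity)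
      have hb'p : 0 < b' := Real.sqrt_pos.mpr (by positivity)
      have hsip : 0 < si := Real.sqrt_pos.mpr (by positivity)
      have hsjp : 0 < sj := Real.sqrt_pos.mpr (by positivity)
      have hSip : (0:ℝ) < 1 + δ * Si := hSpos i
      have hSjp : (0:ℝ) < 1 + δ * Sj := hSpos j
      -- eliminate T' between h1 and h2 to get the cross relation
      have h3 : a' * (p i / (a * si) * (b * (1 + δ * Sj) / sj))
          = b' * (p i / (a * si) * (a * (1 + δ * Si) / si)) := by
        rw [← h2, ← h1]; ring
      field_simp at h3
      have haux : (p i * a * si) * (a * (1 + δ * Si) * (sj * b'))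
          = (p i * a * si) * (b * (1 + δ * Sj) * (si * a')) := by
        linear_combination (-(p i * a * si)) * h3
      have hR : a * (1 + δ * Si) * (sj * b') = b * (1 + δ * Sj) * (si * a') :=
        mul_left_cancel₀ (by positivity) haux
      have hR2 : (a * (1 + δ * Si) * (sj * b'))^2 = (b * (1 + δ * Sj) * (si * a'))^2 := by
        rw [hR]
      rw [← ha, ← hb, ← ha', ← hb', ← hsi, ← hsj, div_mul_div_comm, div_mul_div_comm,
        div_eq_div_iff (by positivity) (by positivity)]
      linear_combination -hR2
    refine ⟨p' ⟨0, hN⟩ * Real.exp (x' ⟨0, hN⟩) / (p ⟨0, hN⟩ * Real.exp (x ⟨0, hN⟩)) *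
        ((1 + δ * p ⟨0, hN⟩) /
          (1 + δ * ∑ k ∈ Finset.univ.filter (fun k => (⟨0, hN⟩ : Fin N) ≤ k),
            p k * Real.exp (x k - x ⟨0, hN⟩)) ^ 2), fun i => ?_⟩
    exact (claim ⟨0, hN⟩ i (by simp [Fin.le_def])).symm
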